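/- arXiv:1205.1985 — 2 statements merged into one kernel-verified Lean document; each statement's English description precedes it below -/
import Mathlib

section
/- Commutation of maximal function and Riesz potential: for 0 < α < n there is a constant C = C(n,α) such that for every non-negative measurable f on ℝ^n and every x ∈ ℝ^n, M(I_α f)(x) ≤ C · I_α(M f)(x), where M is the Hardy–Littlewood maximal operator and I_α f(x) = ∫ |x−y|^{α−n} f(y) dy. -/
set_option maxHeartbeats 1000000

open MeasureTheory Metric
open scoped ENNReal NNReal Topology

section Aux

lemma riesz_ball_bound (n : ℕ) (hn : 0 < n) (α : ℝ) (hα0 : 0 < α) (hαn : α < n) :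
    ∃ D : ℝ≥0∞, D ≠ ∞ ∧ ∀ R : ℝ, 0 < R →
      ∫⁻ z in ball (0 : EuclideanSpace ℝ (Fin n)) R, ENNReal.ofReal (‖z‖ ^ (α - (n : ℝ))) ≤
        ENNReal.ofReal (R ^ α) * D := by
  set E := EuclideanSpace ℝ (Fin n)
  haveI : Nonempty (Fin n) := ⟨⟨0, hn⟩⟩
  haveI : Nontrivial E := inferInstanceAs (Nontrivial (PiLp 2 fun _ : Fin n => ℝ))
  set μB := volume (ball (0 : E) 1) with hμB
  have hμBlt : μB < ∞ := measure_ball_lt_top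
  have hhalf : (2 : ℝ)⁻¹ ^ α < 1 :=
    Real.rpow_lt_one (by norm_num) (by norm_num) hα0
  have hgeo : ENNReal.ofReal ((2:ℝ)⁻¹ ^ α) < 1 := by
    rw [← ENNReal.ofReal_one]
    exact ENNReal.ofReal_lt_ofReal_iff_of_nonneg (by positivity) |>.mpr hhalf
  refine ⟨ENNReal.ofReal ((2:ℝ) ^ ((n : ℝ) - α)) * (1 - ENNReal.ofReal ((2:ℝ)⁻¹ ^ α))⁻¹ * μB,
    ?_, ?_⟩
  · refine ENNReal.mul_ne_top (ENNReal.mul_ne_top ENNReal.ofReal_ne_top ?_) hμBlt.ne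
    rw [ENNReal.inv_ne_top]
    exact (tsub_pos_of_lt hgeo).ne'
  intro R hR
  -- annuli
  set s : ℕ → Set E := fun k => ball (0 : E) (R * 2⁻¹ ^ k) \ ball (0 : E) (R * 2⁻¹ ^ (k + 1))
    with hs
  have hcover : ball (0 : E) R ⊆ {(0 : E)} ∪ ⋃ k, s k := by
    intro z hz
    rcases eq_or_ne z 0 with rfl | hz0
    · exact Set.mem_union_left _ rfl
    have hzn : 0 < ‖z‖ := norm_pos_iff.mpr hz0
    have hzR : ‖z‖ < R := by simpa [mem_ball_zero_iff] using hz
    have hex : ∃ k : ℕ, R * 2⁻¹ ^ (k + 1) ≤ ‖z‖ := by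
      obtain ⟨m, hm⟩ := exists_pow_lt_of_lt_one (div_pos hzn hR) (by norm_num : (2:ℝ)⁻¹ < 1)
      refine ⟨m, ?_⟩
      have h1 : (2:ℝ)⁻¹ ^ (m + 1) ≤ 2⁻¹ ^ m :=
        pow_le_pow_of_le_one (by norm_num) (by norm_num) (Nat.le_succ m)
      have := (lt_div_iff₀ hR).mp hm
      nlinarith [pow_pos (by norm_num : (0:ℝ) < 2⁻¹) (m+1)]
    set k₀ := Nat.find hex with hk₀
    refine Set.mem_union_right _ (Set.mem_iUnion.mpr ⟨k₀, ?_, ?_⟩)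
    · rw [mem_ball_zero_iff]
      rcases Nat.eq_zero_or_pos k₀ with h0 | hpos
      · rw [h0]; simpa using hzR
      · obtain ⟨j, hj⟩ := Nat.exists_eq_succ_of_ne_zero hpos.ne'
        have hlt : j < k₀ := by omega
        have := Nat.find_min hex (hk₀ ▸ hlt)
        push_neg at this
        rw [hj]
        exact this
    · intro hmem
      rw [mem_ball_zero_iff] at hmem
      exact absurd (Nat.find_spec hex) (not_le.mpr hmem)
  calc ∫⁻ z in ball (0 : E) R, ENNReal.ofReal (‖z‖ ^ (α - (n : ℝ)))
      ≤ ∫⁻ z in ({(0:E)} ∪ ⋃ k, s k), ENNReal.ofReal (‖z‖ ^ (α - (n : ℝ))) :=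
        lintegral_mono_set hcover
    _ ≤ (∫⁻ z in ({(0:E)} : Set E), ENNReal.ofReal (‖z‖ ^ (α - (n : ℝ))))
        + ∫⁻ z in (⋃ k, s k), ENNReal.ofReal (‖z‖ ^ (α - (n : ℝ))) := lintegral_union_le _ _ _
    _ = ∫⁻ z in (⋃ k, s k), ENNReal.ofReal (‖z‖ ^ (α - (n : ℝ))) := by
        rw [lintegral_singleton]
        simp [Real.zero_rpow (sub_ne_zero.mpr (show α ≠ (n:ℝ) from hαn.ne))]
    _ ≤ ∑' k, ∫⁻ z in s k, ENNReal.ofReal (‖z‖ ^ (α - (n : ℝ))) := lintegral_iUnion_le _ _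
    _ ≤ ∑' k, ENNReal.ofReal (R ^ α) *
          (ENNReal.ofReal ((2:ℝ) ^ ((n : ℝ) - α)) * ENNReal.ofReal ((2:ℝ)⁻¹ ^ α) ^ k * μB) := by
        refine ENNReal.tsum_le_tsum fun k => ?_
        have hrk : (0:ℝ) < R * 2⁻¹ ^ (k+1) := by positivity
        have hbound : ∀ z ∈ s k, ENNReal.ofReal (‖z‖ ^ (α - (n : ℝ)))
            ≤ ENNReal.ofReal ((R * 2⁻¹ ^ (k+1)) ^ (α - (n : ℝ))) := by
          intro z hzk
          have h1 : R * 2⁻¹ ^ (k+1) ≤ ‖z‖ := by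
            have := hzk.2
            rw [mem_ball_zero_iff, not_lt] at this
            exact this
          exact ENNReal.ofReal_le_ofReal
            (Real.rpow_le_rpow_of_nonpos hrk h1 (by linarith))
        calc ∫⁻ z in s k, ENNReal.ofReal (‖z‖ ^ (α - (n : ℝ)))
            ≤ ∫⁻ _ in s k, ENNReal.ofReal ((R * 2⁻¹ ^ (k+1)) ^ (α - (n : ℝ))) :=
              setLIntegral_mono (by fun_prop) hbound
          _ = ENNReal.ofReal ((R * 2⁻¹ ^ (k+1)) ^ (α - (n : ℝ))) * volume (s k) :=
              setLIntegral_const _ _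
          _ ≤ ENNReal.ofReal ((R * 2⁻¹ ^ (k+1)) ^ (α - (n : ℝ))) *
              (ENNReal.ofReal ((R * 2⁻¹ ^ k) ^ n) * μB) := by
              gcongr
              rw [hμB]
              have := Measure.addHaar_ball (volume : Measure E) (0 : E)
                (show (0:ℝ) ≤ R * 2⁻¹ ^ k by positivity)
              rw [finrank_euclideanSpace_fin] at this
              exact le_of_le_of_eq (measure_mono Set.diff_subset) this
          _ = ENNReal.ofReal (R ^ α) *
              (ENNReal.ofReal ((2:ℝ) ^ ((n : ℝ) - α)) * ENNReal.ofReal ((2:ℝ)⁻¹ ^ α) ^ k * μB) := by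
              rw [← ENNReal.ofReal_pow (by positivity), ← mul_assoc, ← mul_assoc,
                ← ENNReal.ofReal_mul (by positivity), ← ENNReal.ofReal_mul (by positivity),
                ← ENNReal.ofReal_mul (by positivity)]
              congr 2
              rw [Real.mul_rpow hR.le (by positivity), ← Real.rpow_natCast (R * 2⁻¹ ^ k) n,
                Real.mul_rpow hR.le (by positivity)]
              have hRpow : R ^ (α - (n:ℝ)) * R ^ (n:ℝ) = R ^ α := by
                rw [← Real.rpow_add hR]; ring_nf
              have hp1 : ((2:ℝ)⁻¹ ^ (k+1)) ^ (α - (n:ℝ)) = ((2:ℝ)⁻¹ ^ k) ^ (α - (n:ℝ)) *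
                  (2:ℝ)⁻¹ ^ (α - (n:ℝ)) := by
                rw [pow_succ, Real.mul_rpow (by positivity) (by norm_num)]
              have hp2 : ((2:ℝ)⁻¹ ^ k) ^ (α - (n:ℝ)) * ((2:ℝ)⁻¹ ^ k) ^ (n:ℝ)
                  = ((2:ℝ)⁻¹ ^ α) ^ k := by
                rw [← Real.rpow_add (by positivity), ← Real.rpow_natCast ((2:ℝ)⁻¹ ^ α) k,
                  ← Real.rpow_natCast (2:ℝ)⁻¹ k, ← Real.rpow_mul (by norm_num),
                  ← Real.rpow_mul (by norm_num)]
                ring_nf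
              have hp3 : ((2:ℝ)⁻¹) ^ (α - (n:ℝ)) = (2:ℝ) ^ ((n:ℝ) - α) := by
                rw [Real.inv_rpow (by norm_num), ← Real.rpow_neg (by norm_num)]
                ring_nf
              calc R ^ (α - (n:ℝ)) * ((2:ℝ)⁻¹ ^ (k+1)) ^ (α - (n:ℝ)) *
                    (R ^ (n:ℝ) * ((2:ℝ)⁻¹ ^ k) ^ (n:ℝ))
                  = (R ^ (α - (n:ℝ)) * R ^ (n:ℝ)) *
                    ((((2:ℝ)⁻¹ ^ k) ^ (α - (n:ℝ)) * ((2:ℝ)⁻¹ ^ k) ^ (n:ℝ)) *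
                     ((2:ℝ)⁻¹) ^ (α - (n:ℝ))) := by rw [hp1]; ring
                _ = R ^ α * ((2:ℝ) ^ ((n:ℝ) - α) * ((2:ℝ)⁻¹ ^ α) ^ k) := by
                    rw [hRpow, hp2, hp3]; ring
    _ = ENNReal.ofReal (R ^ α) *
          (ENNReal.ofReal ((2:ℝ) ^ ((n : ℝ) - α)) * (1 - ENNReal.ofReal ((2:ℝ)⁻¹ ^ α))⁻¹ * μB) := by
        rw [ENNReal.tsum_mul_left]
        congr 1
        rw [show ∀ a b c : ℝ≥0∞, (fun k => a * b ^ k * c) = (fun k : ℕ => (a * c) * b ^ k) from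
          fun a b c => by funext k; ring]
        rw [ENNReal.tsum_mul_left, ENNReal.tsum_geometric]
        ring

lemma lintegral_ball_sub (n : ℕ) (g : EuclideanSpace ℝ (Fin n) → ℝ≥0∞)
    (y : EuclideanSpace ℝ (Fin n)) (R : ℝ) :
    ∫⁻ z in ball y R, g (z - y) = ∫⁻ z in ball (0 : EuclideanSpace ℝ (Fin n)) R, g z := by
  rw [← lintegral_indicator measurableSet_ball, ← lintegral_indicator measurableSet_ball]
  have h : ∀ z, (ball y R).indicator (fun z => g (z - y)) z
      = (ball (0 : EuclideanSpace ℝ (Fin n)) R).indicator g (z + -y) := by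
    intro z
    by_cases hz : z ∈ ball y R
    · rw [Set.indicator_of_mem hz, Set.indicator_of_mem]
      · rfl
      · rw [mem_ball_zero_iff]
        simpa [dist_eq_norm, sub_eq_add_neg] using hz
    · rw [Set.indicator_of_notMem hz, Set.indicator_of_notMem]
      intro hmem
      rw [mem_ball_zero_iff] at hmem
      exact hz (by simpa [dist_eq_norm, sub_eq_add_neg] using hmem)
  simp_rw [h]
  exact lintegral_add_right_eq_self _ _

lemma avg_kernel (n : ℕ) (hn : 0 < n) (α : ℝ) (hα0 : 0 < α) (hαn : α < n) :
    ∃ C₁ : ℝ≥0∞, C₁ ≠ ∞ ∧ ∀ (x y : EuclideanSpace ℝ (Fin n)), y ≠ x → ∀ r : ℝ, 0 < r →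
      ∫⁻ z in ball x r, ENNReal.ofReal (‖z - y‖ ^ (α - (n : ℝ))) ≤
        volume (ball x r) * C₁ * ENNReal.ofReal (‖x - y‖ ^ (α - (n : ℝ))) := by
  set E := EuclideanSpace ℝ (Fin n)
  haveI : Nonempty (Fin n) := ⟨⟨0, hn⟩⟩
  haveI : Nontrivial E := inferInstanceAs (Nontrivial (PiLp 2 fun _ : Fin n => ℝ))
  obtain ⟨D, hD, hDle⟩ := riesz_ball_bound n hn α hα0 hαn
  set μB := volume (ball (0 : E) 1) with hμB
  have hμB0 : μB ≠ 0 := (measure_ball_pos _ _ one_pos).ne'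
  have hμBt : μB ≠ ∞ := measure_ball_lt_top.ne
  refine ⟨ENNReal.ofReal ((2:ℝ) ^ ((n:ℝ) - α)) +
    ENNReal.ofReal ((3:ℝ) ^ α * (2:ℝ) ^ ((n:ℝ) - α)) * D * μB⁻¹, ?_, ?_⟩
  · exact ENNReal.add_ne_top.mpr ⟨ENNReal.ofReal_ne_top,
      ENNReal.mul_ne_top (ENNReal.mul_ne_top ENNReal.ofReal_ne_top hD)
        (ENNReal.inv_ne_top.mpr hμB0)⟩
  intro x y hyx r hr
  have hxy : 0 < ‖x - y‖ := norm_sub_pos_iff.mpr (Ne.symm hyx)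
  have hαn' : α - (n:ℝ) ≤ 0 := by
    have : α < (n:ℝ) := hαn
    linarith
  rcases le_or_gt (2 * r) ‖x - y‖ with hcase | hcase
  · -- far case
    have hbound : ∀ z ∈ ball x r, ENNReal.ofReal (‖z - y‖ ^ (α - (n:ℝ)))
        ≤ ENNReal.ofReal ((2:ℝ) ^ ((n:ℝ) - α) * ‖x - y‖ ^ (α - (n:ℝ))) := by
      intro z hz
      rw [mem_ball, dist_eq_norm] at hz
      have ht := dist_triangle x z y
      rw [dist_eq_norm, dist_eq_norm, dist_eq_norm] at ht
      have hzx : ‖x - z‖ = ‖z - x‖ := norm_sub_rev x z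
      have h1 : ‖x - y‖ / 2 ≤ ‖z - y‖ := by linarith
      have h2 : ‖z - y‖ ^ (α - (n:ℝ)) ≤ (‖x - y‖ / 2) ^ (α - (n:ℝ)) :=
        Real.rpow_le_rpow_of_nonpos (by linarith) h1 hαn'
      have h3 : (‖x - y‖ / 2) ^ (α - (n:ℝ)) = (2:ℝ) ^ ((n:ℝ) - α) * ‖x - y‖ ^ (α - (n:ℝ)) := by
        rw [Real.div_rpow hxy.le (by norm_num), show (n:ℝ) - α = -(α - (n:ℝ)) by ring,
          Real.rpow_neg (by norm_num : (0:ℝ) ≤ 2)]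
        ring
      exact ENNReal.ofReal_le_ofReal (by rw [← h3]; exact h2)
    calc ∫⁻ z in ball x r, ENNReal.ofReal (‖z - y‖ ^ (α - (n:ℝ)))
        ≤ ∫⁻ _ in ball x r, ENNReal.ofReal ((2:ℝ) ^ ((n:ℝ) - α) * ‖x - y‖ ^ (α - (n:ℝ))) :=
          setLIntegral_mono measurable_const hbound
      _ = ENNReal.ofReal ((2:ℝ) ^ ((n:ℝ) - α) * ‖x - y‖ ^ (α - (n:ℝ))) * volume (ball x r) :=
          setLIntegral_const _ _
      _ = volume (ball x r) * ENNReal.ofReal ((2:ℝ) ^ ((n:ℝ) - α)) *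
          ENNReal.ofReal (‖x - y‖ ^ (α - (n:ℝ))) := by
          rw [ENNReal.ofReal_mul (by positivity)]; ring
      _ ≤ volume (ball x r) * (ENNReal.ofReal ((2:ℝ) ^ ((n:ℝ) - α)) +
            ENNReal.ofReal ((3:ℝ) ^ α * (2:ℝ) ^ ((n:ℝ) - α)) * D * μB⁻¹) *
          ENNReal.ofReal (‖x - y‖ ^ (α - (n:ℝ))) := by
          gcongr
          exact le_self_add
  · -- near case
    have hsub : ball x r ⊆ ball y (3 * r) := by
      intro z hz
      rw [mem_ball] at hz ⊢
      have := dist_triangle z x y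
      rw [dist_eq_norm x y] at this
      linarith
    have hvol : volume (ball x r) = ENNReal.ofReal (r ^ (n:ℝ)) * μB := by
      rw [hμB]
      have h := Measure.addHaar_ball (volume : Measure E) x hr.le
      rw [finrank_euclideanSpace_fin] at h
      rw [h, ← Real.rpow_natCast r n]
    have hk : ENNReal.ofReal ((2*r) ^ (α-(n:ℝ))) ≤ ENNReal.ofReal (‖x - y‖ ^ (α-(n:ℝ))) :=
      ENNReal.ofReal_le_ofReal (Real.rpow_le_rpow_of_nonpos hxy hcase.le hαn')
    have hreal : r ^ (n:ℝ) * ((3:ℝ) ^ α * (2:ℝ) ^ ((n:ℝ) - α)) * ((2*r) ^ (α - (n:ℝ)))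
        = (3 * r) ^ α := by
      have e1 : (2:ℝ) ^ ((n:ℝ) - α) * (2:ℝ) ^ (α - (n:ℝ)) = 1 := by
        rw [← Real.rpow_add (by norm_num : (0:ℝ) < 2)]
        simp
      have e2 : r ^ ((n:ℝ)) * r ^ (α - (n:ℝ)) = r ^ α := by
        rw [← Real.rpow_add hr]
        ring_nf
      rw [Real.mul_rpow (by norm_num : (0:ℝ) ≤ 2) hr.le,
        Real.mul_rpow (by norm_num : (0:ℝ) ≤ 3) hr.le]
      calc r ^ (n:ℝ) * ((3:ℝ) ^ α * (2:ℝ) ^ ((n:ℝ) - α)) *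
            ((2:ℝ) ^ (α - (n:ℝ)) * r ^ (α - (n:ℝ)))
          = (3:ℝ) ^ α * (r ^ (n:ℝ) * r ^ (α - (n:ℝ))) *
            ((2:ℝ) ^ ((n:ℝ) - α) * (2:ℝ) ^ (α - (n:ℝ))) := by ring
        _ = (3:ℝ) ^ α * r ^ α := by rw [e1, e2, mul_one]
    calc ∫⁻ z in ball x r, ENNReal.ofReal (‖z - y‖ ^ (α - (n:ℝ)))
        ≤ ∫⁻ z in ball y (3*r), ENNReal.ofReal (‖z - y‖ ^ (α - (n:ℝ))) :=
          lintegral_mono_set hsub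
      _ = ∫⁻ z in ball (0:E) (3*r), ENNReal.ofReal (‖z‖ ^ (α - (n:ℝ))) :=
          lintegral_ball_sub n (fun v => ENNReal.ofReal (‖v‖ ^ (α - (n:ℝ)))) y (3*r)
      _ ≤ ENNReal.ofReal ((3*r) ^ α) * D := hDle _ (by positivity)
      _ = ENNReal.ofReal (r ^ (n:ℝ)) * μB *
          (ENNReal.ofReal ((3:ℝ) ^ α * (2:ℝ) ^ ((n:ℝ) - α)) * D * μB⁻¹) *
          ENNReal.ofReal ((2*r) ^ (α - (n:ℝ))) := by
          have hc : μB * μB⁻¹ = 1 := ENNReal.mul_inv_cancel hμB0 hμBt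
          calc ENNReal.ofReal ((3*r) ^ α) * D
              = (ENNReal.ofReal (r ^ (n:ℝ)) * ENNReal.ofReal ((3:ℝ) ^ α * (2:ℝ) ^ ((n:ℝ) - α)) *
                 ENNReal.ofReal ((2*r) ^ (α - (n:ℝ)))) * D := by
                rw [← ENNReal.ofReal_mul (by positivity), ← ENNReal.ofReal_mul (by positivity),
                  hreal]
            _ = (μB * μB⁻¹) * (ENNReal.ofReal (r ^ (n:ℝ)) *
                 ENNReal.ofReal ((3:ℝ) ^ α * (2:ℝ) ^ ((n:ℝ) - α)) *
                 ENNReal.ofReal ((2*r) ^ (α - (n:ℝ)))) * D := by rw [hc, one_mul]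
            _ = _ := by ring
      _ ≤ volume (ball x r) * (ENNReal.ofReal ((2:ℝ) ^ ((n:ℝ) - α)) +
            ENNReal.ofReal ((3:ℝ) ^ α * (2:ℝ) ^ ((n:ℝ) - α)) * D * μB⁻¹) *
          ENNReal.ofReal (‖x - y‖ ^ (α - (n:ℝ))) := by
          rw [hvol]
          gcongr
          exact le_add_self

end Aux

/-- Riesz potential `I_α g(x) = ∫ |x-y|^{α-n} g(y) dy` (values in `[0,∞]`). -/
noncomputable def rieszPot (n : ℕ) (α : ℝ) (g : EuclideanSpace ℝ (Fin n) → ENNReal)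
    (x : EuclideanSpace ℝ (Fin n)) : ENNReal :=
  ∫⁻ y, ENNReal.ofReal (‖x - y‖ ^ (α - (n : ℝ))) * g y

/-- Centered Hardy–Littlewood maximal function `M g(x) = sup_{r>0} ⨍_{B_r(x)} g`. -/
noncomputable def maximal (n : ℕ) (g : EuclideanSpace ℝ (Fin n) → ENNReal)
    (x : EuclideanSpace ℝ (Fin n)) : ENNReal :=
  ⨆ (r : ℝ) (_ : 0 < r), (volume (ball x r))⁻¹ * ∫⁻ y in ball x r, g y

lemma avg_riesz_le (n : ℕ) (hn : 0 < n) (α : ℝ) (hα0 : 0 < α) (hαn : α < n)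
    (C₁ : ℝ≥0∞) (hC₁t : C₁ ≠ ∞)
    (hC₁ : ∀ (x y : EuclideanSpace ℝ (Fin n)), y ≠ x → ∀ r : ℝ, 0 < r →
      ∫⁻ z in ball x r, ENNReal.ofReal (‖z - y‖ ^ (α - (n : ℝ))) ≤
        volume (ball x r) * C₁ * ENNReal.ofReal (‖x - y‖ ^ (α - (n : ℝ))))
    (g : EuclideanSpace ℝ (Fin n) → ℝ≥0∞) (hg : Measurable g)
    (x : EuclideanSpace ℝ (Fin n)) (r : ℝ) (hr : 0 < r) :
    (volume (ball x r))⁻¹ * ∫⁻ z in ball x r, rieszPot n α g z ≤ C₁ * rieszPot n α g x := by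
  haveI : Nonempty (Fin n) := ⟨⟨0, hn⟩⟩
  have hv0 : volume (ball x r) ≠ 0 := (measure_ball_pos _ _ hr).ne'
  have hvt : volume (ball x r) ≠ ∞ := measure_ball_lt_top.ne
  haveI : Nontrivial (EuclideanSpace ℝ (Fin n)) :=
    inferInstanceAs (Nontrivial (PiLp 2 fun _ : Fin n => ℝ))
  have hkm : Measurable fun p : EuclideanSpace ℝ (Fin n) × EuclideanSpace ℝ (Fin n) =>
      ENNReal.ofReal (‖p.1 - p.2‖ ^ (α - (n : ℝ))) :=
    ENNReal.measurable_ofReal.comp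
      ((measurable_fst.sub measurable_snd).norm.pow_const (α - (n : ℝ)))
  have hmain : ∫⁻ z in ball x r, rieszPot n α g z ≤
      volume (ball x r) * (C₁ * rieszPot n α g x) := by
    have hswap : ∫⁻ z in ball x r, rieszPot n α g z
        = ∫⁻ y, ∫⁻ z in ball x r, ENNReal.ofReal (‖z - y‖ ^ (α - (n : ℝ))) * g y := by
      simp only [rieszPot]
      have ham : AEMeasurable
          (Function.uncurry fun z y : EuclideanSpace ℝ (Fin n) =>
            ENNReal.ofReal (‖z - y‖ ^ (α - (n : ℝ))) * g y)
          ((volume.restrict (ball x r)).prod volume) :=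
        (hkm.mul (hg.comp measurable_snd)).aemeasurable
      exact lintegral_lintegral_swap ham
    rw [hswap]
    have hinner : ∀ y : EuclideanSpace ℝ (Fin n), ∫⁻ z in ball x r, ENNReal.ofReal (‖z - y‖ ^ (α - (n : ℝ))) * g y
        = (∫⁻ z in ball x r, ENNReal.ofReal (‖z - y‖ ^ (α - (n : ℝ)))) * g y := fun y =>
      lintegral_mul_const'' (g y)
        (ENNReal.measurable_ofReal.comp
          ((measurable_id.sub measurable_const).norm.pow_const (α - (n : ℝ)))).aemeasurable
    simp_rw [hinner]
    have hae : ∀ᵐ y : EuclideanSpace ℝ (Fin n) ∂volume, y ≠ x := by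
      rw [ae_iff]
      simpa using measure_singleton x
    calc ∫⁻ y, (∫⁻ z in ball x r, ENNReal.ofReal (‖z - y‖ ^ (α - (n : ℝ)))) * g y
        ≤ ∫⁻ y, (volume (ball x r) * C₁) *
            (ENNReal.ofReal (‖x - y‖ ^ (α - (n : ℝ))) * g y) := by
          refine lintegral_mono_ae ?_
          filter_upwards [hae] with y hy
          rw [← mul_assoc]
          exact mul_le_mul_left (hC₁ x y hy r hr) (g y)
      _ = volume (ball x r) * (C₁ * rieszPot n α g x) := by
          rw [lintegral_const_mul' _ _ (ENNReal.mul_ne_top hvt hC₁t), rieszPot, mul_assoc]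
  calc (volume (ball x r))⁻¹ * ∫⁻ z in ball x r, rieszPot n α g z
      ≤ (volume (ball x r))⁻¹ * (volume (ball x r) * (C₁ * rieszPot n α g x)) := by gcongr
    _ = C₁ * rieszPot n α g x := by
        rw [← mul_assoc, ENNReal.inv_mul_cancel hv0 hvt, one_mul]

/-- Commutation of the maximal function and the Riesz potential:
`M(I_α f)(x) ≤ C · I_α(M f)(x)` for every nonnegative measurable `f`. -/
theorem stmt11 (n : ℕ) (hn : 0 < n) (α : ℝ) (hα0 : 0 < α) (hαn : α < n) :
    ∃ C : ℝ, 0 < C ∧ ∀ f : EuclideanSpace ℝ (Fin n) → ℝ, Measurable f → (∀ x, 0 ≤ f x) →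
      ∀ x : EuclideanSpace ℝ (Fin n),
        maximal n (rieszPot n α (fun y => ENNReal.ofReal (f y))) x ≤
          ENNReal.ofReal C * rieszPot n α (maximal n (fun y => ENNReal.ofReal (f y))) x := by
  classical
  set E := EuclideanSpace ℝ (Fin n)
  haveI : Nonempty (Fin n) := ⟨⟨0, hn⟩⟩
  haveI : Nontrivial E := inferInstanceAs (Nontrivial (PiLp 2 fun _ : Fin n => ℝ))
  obtain ⟨C₁, hC₁t, hC₁⟩ := avg_kernel n hn α hα0 hαn
  set c2 : ℝ≥0∞ := ENNReal.ofReal ((2:ℝ) ^ n) with hc2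
  have hc2t : c2 ≠ ∞ := ENNReal.ofReal_ne_top
  set C : ℝ := (C₁ * c2).toReal + 1 with hC
  have hCpos : 0 < C := by positivity
  have hCge : C₁ * c2 ≤ ENNReal.ofReal C := by
    have h1 : C₁ * c2 ≠ ∞ := ENNReal.mul_ne_top hC₁t hc2t
    calc C₁ * c2 = ENNReal.ofReal ((C₁ * c2).toReal) := (ENNReal.ofReal_toReal h1).symm
      _ ≤ ENNReal.ofReal C := ENNReal.ofReal_le_ofReal (by rw [hC]; linarith)
  refine ⟨C, hCpos, ?_⟩
  intro f hf hf0 x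
  set g : E → ℝ≥0∞ := fun y => ENNReal.ofReal (f y) with hg
  have hgm : Measurable g := ENNReal.measurable_ofReal.comp hf
  -- Step 1
  have step1 : maximal n (rieszPot n α g) x ≤ C₁ * rieszPot n α g x := by
    rw [maximal]
    exact iSup_le fun r => iSup_le fun hr =>
      avg_riesz_le n hn α hα0 hαn C₁ hC₁t hC₁ g hgm x r hr
  by_cases hloc : ∀ R : ℝ, ∫⁻ y in ball (0 : E) R, g y ≠ ∞
  · -- locally integrable case
    have hfin : ∀ (c : E) (R : ℝ), ∫⁻ y in closedBall c R, g y ≠ ∞ := by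
      intro c R
      obtain ⟨R', hR'⟩ := (isBounded_closedBall (x := c) (r := R)).subset_ball 0
      exact ((lintegral_mono_set hR').trans_lt (lt_top_iff_ne_top.mpr (hloc R'))).ne
    have hloci : LocallyIntegrable f volume := by
      intro y
      refine ⟨ball y 1, ball_mem_nhds y one_pos, hf.aestronglyMeasurable.restrict, ?_⟩
      rw [hasFiniteIntegral_iff_ofReal (Filter.Eventually.of_forall hf0)]
      exact ((lintegral_mono_set ball_subset_closedBall).trans_lt
        (lt_top_iff_ne_top.mpr (hfin y 1)))
    -- a.e. pointwise bound by the maximal function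
    have hae : ∀ᵐ y : E ∂volume, g y ≤ c2 * maximal n g y := by
      filter_upwards [IsUnifLocDoublingMeasure.ae_tendsto_average
        (μ := (volume : Measure E)) hloci 1] with y hy
      have hten : Filter.Tendsto (fun r : ℝ => ⨍ z in closedBall y r, f z)
          (nhdsWithin 0 (Set.Ioi 0)) (nhds (f y)) := by
        refine hy (fun _ => y) id Filter.tendsto_id ?_
        filter_upwards [self_mem_nhdsWithin] with r hr
        simp only [mem_closedBall, dist_self, one_mul, id_eq]
        exact le_of_lt (Set.mem_Ioi.mp hr)
      have hcomp : Filter.Tendsto (fun r : ℝ => ENNReal.ofReal (⨍ z in closedBall y r, f z))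
          (nhdsWithin 0 (Set.Ioi 0)) (nhds (ENNReal.ofReal (f y))) :=
        (ENNReal.continuous_ofReal.tendsto _).comp hten
      refine le_of_tendsto hcomp ?_
      filter_upwards [self_mem_nhdsWithin] with r hr
      have hrpos : (0:ℝ) < r := hr
      set μB := volume (ball (0 : E) 1) with hμB
      have hμB0 : μB ≠ 0 := (measure_ball_pos _ _ one_pos).ne'
      have hμBt : μB ≠ ∞ := measure_ball_lt_top.ne
      have hvcb : volume (closedBall y r) = ENNReal.ofReal (r ^ n) * μB := by
        have h := Measure.addHaar_closedBall (volume : Measure E) y hrpos.le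
        rwa [finrank_euclideanSpace_fin] at h
      have hvb2 : volume (ball y (2*r)) = ENNReal.ofReal ((2*r) ^ n) * μB := by
        have h := Measure.addHaar_ball (volume : Measure E) y (by linarith : (0:ℝ) ≤ 2*r)
        rwa [finrank_euclideanSpace_fin] at h
      have hcb0 : volume (closedBall y r) ≠ 0 := (measure_closedBall_pos _ _ hrpos).ne'
      have hcbt : volume (closedBall y r) ≠ ∞ := measure_closedBall_lt_top.ne
      have hb20 : volume (ball y (2*r)) ≠ 0 := (measure_ball_pos _ _ (by linarith)).ne'
      have hb2t : volume (ball y (2*r)) ≠ ∞ := measure_ball_lt_top.ne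
      -- identify the average with lintegrals
      have hofReal : ENNReal.ofReal (⨍ z in closedBall y r, f z)
          = (volume (closedBall y r))⁻¹ * ∫⁻ z in closedBall y r, g z := by
        rw [setAverage_eq, smul_eq_mul,
          integral_eq_lintegral_of_nonneg_ae (Filter.Eventually.of_forall hf0)
            hf.aestronglyMeasurable.restrict,
          ENNReal.ofReal_mul (by positivity), ENNReal.ofReal_toReal (hfin y r),
          measureReal_def, ENNReal.ofReal_inv_of_pos (ENNReal.toReal_pos hcb0 hcbt),
          ENNReal.ofReal_toReal hcbt]
      rw [hofReal]
      have hratio : (volume (closedBall y r))⁻¹ * volume (ball y (2*r)) = c2 := by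
        rw [hvcb, hvb2, hc2, mul_pow, ENNReal.ofReal_mul (by positivity),
          ENNReal.mul_inv (Or.inl (by simp [ENNReal.ofReal_eq_zero]; positivity)) (Or.inl ENNReal.ofReal_ne_top)]
        have h1 : (ENNReal.ofReal (r ^ n))⁻¹ * μB⁻¹ *
            (ENNReal.ofReal ((2:ℝ) ^ n) * ENNReal.ofReal (r ^ n) * μB)
            = ENNReal.ofReal ((2:ℝ) ^ n) *
              ((ENNReal.ofReal (r ^ n))⁻¹ * ENNReal.ofReal (r ^ n)) * (μB⁻¹ * μB) := by ring
        rw [h1, ENNReal.inv_mul_cancel (by simp [ENNReal.ofReal_eq_zero]; positivity)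
          ENNReal.ofReal_ne_top, ENNReal.inv_mul_cancel hμB0 hμBt, mul_one, mul_one]
      calc (volume (closedBall y r))⁻¹ * ∫⁻ z in closedBall y r, g z
          ≤ (volume (closedBall y r))⁻¹ * ∫⁻ z in ball y (2*r), g z := by
            gcongr
            exact (show closedBall y r ⊆ ball y (2*r) from fun z hz => by
              rw [mem_ball]
              rw [mem_closedBall] at hz
              linarith)
        _ = ((volume (closedBall y r))⁻¹ * volume (ball y (2*r))) *
            ((volume (ball y (2*r)))⁻¹ * ∫⁻ z in ball y (2*r), g z) := by
            rw [mul_assoc, ← mul_assoc (volume (ball y (2*r))),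
              ENNReal.mul_inv_cancel hb20 hb2t, one_mul]
        _ ≤ c2 * maximal n g y := by
            rw [hratio]
            gcongr
            exact le_iSup₂ (f := fun (s : ℝ) (_ : 0 < s) =>
              (volume (ball y s))⁻¹ * ∫⁻ z in ball y s, g z) (2*r) (by linarith)
    -- transfer to the Riesz potential
    have step2 : rieszPot n α g x ≤ c2 * rieszPot n α (maximal n g) x := by
      rw [rieszPot, rieszPot, ← lintegral_const_mul' _ _ hc2t]
      refine lintegral_mono_ae ?_
      filter_upwards [hae] with y hy
      calc ENNReal.ofReal (‖x - y‖ ^ (α - (n:ℝ))) * g y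
          ≤ ENNReal.ofReal (‖x - y‖ ^ (α - (n:ℝ))) * (c2 * maximal n g y) :=
            mul_le_mul_right hy _
        _ = c2 * (ENNReal.ofReal (‖x - y‖ ^ (α - (n:ℝ))) * maximal n g y) := by ring
    calc maximal n (rieszPot n α g) x ≤ C₁ * rieszPot n α g x := step1
      _ ≤ C₁ * (c2 * rieszPot n α (maximal n g) x) := by gcongr
      _ = (C₁ * c2) * rieszPot n α (maximal n g) x := by ring
      _ ≤ ENNReal.ofReal C * rieszPot n α (maximal n g) x := by gcongr
  · -- non locally integrable: the right-hand side is infinite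
    push_neg at hloc
    obtain ⟨R, hR⟩ := hloc
    have hMtop : ∀ y : E, maximal n g y = ∞ := by
      intro y
      set r : ℝ := |R| + ‖y‖ + 1 with hrdef
      have hrpos : 0 < r := by positivity
      have hsub : ball (0 : E) R ⊆ ball y r := by
        intro z hz
        rw [mem_ball] at hz ⊢
        have h1 : dist z y ≤ dist z 0 + dist (0 : E) y := dist_triangle _ _ _
        have h2 : dist (0 : E) y = ‖y‖ := by rw [dist_comm, dist_zero_right]
        have h3 : R ≤ |R| := le_abs_self R
        rw [hrdef]
        linarith
      have hint : ∫⁻ z in ball y r, g z = ∞ :=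
        top_le_iff.mp (hR ▸ lintegral_mono_set hsub)
      refine top_le_iff.mp ?_
      calc (∞:ℝ≥0∞) = (volume (ball y r))⁻¹ * ∫⁻ z in ball y r, g z := by
            rw [hint, ENNReal.mul_top (by simp [measure_ball_lt_top.ne])]
        _ ≤ maximal n g y := le_iSup₂ (f := fun (s : ℝ) (_ : 0 < s) =>
              (volume (ball y s))⁻¹ * ∫⁻ z in ball y s, g z) r hrpos
    have hRtop : rieszPot n α (maximal n g) x = ∞ := by
      refine top_le_iff.mp ?_
      have hle : ∫⁻ y in ball x 1, ENNReal.ofReal (‖x - y‖ ^ (α - (n:ℝ))) * maximal n g y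
          ≤ rieszPot n α (maximal n g) x := setLIntegral_le_lintegral _ _
      refine le_trans ?_ hle
      have hae2 : ∀ᵐ y : E ∂(volume.restrict (ball x 1)),
          ENNReal.ofReal (‖x - y‖ ^ (α - (n:ℝ))) * maximal n g y = ∞ := by
        refine ae_restrict_of_ae ?_
        have hne : ∀ᵐ y : E ∂volume, y ≠ x := by
          rw [ae_iff]; simpa using measure_singleton x
        filter_upwards [hne] with y hy
        have hpos : 0 < ‖x - y‖ ^ (α - (n:ℝ)) :=
          Real.rpow_pos_of_pos (norm_sub_pos_iff.mpr (Ne.symm hy)) _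
        rw [hMtop y, ENNReal.mul_top (by simp [ENNReal.ofReal_eq_zero, not_le]; exact hpos)]
      rw [lintegral_congr_ae hae2, setLIntegral_const, ENNReal.top_mul
        (measure_ball_pos _ _ one_pos).ne']
    rw [hRtop, ENNReal.mul_top (by simp [ENNReal.ofReal_eq_zero, not_le]; exact hCpos)]
    exact le_top
end

section
/- Oscillation bound via the maximal function of a Riesz potential: for 0 < α < n there is a constant C such that for every non-negative f ∈ L^1_loc(ℝ^n), every x₀ and every r > 0, ⨍_{B_r(x₀)} |I_α f − ⨍_{B_r(x₀)} I_α f| ≤ 2 M(I_α f)(x₀) ≤ C · I_α(M f)(x₀). -/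
open MeasureTheory Metric

open Filter

section Aux

variable {n : ℕ} {α : ℝ}

local notation "E" => EuclideanSpace ℝ (Fin n)

lemma nontrivialE (hn : 0 < n) : Nontrivial (EuclideanSpace ℝ (Fin n)) :=
  Module.nontrivial_of_finrank_pos (R := ℝ) (by rw [finrank_euclideanSpace_fin]; exact hn)

lemma vol_ball (hn : 0 < n) (x : E) {t : ℝ} (ht : 0 ≤ t) :
    volume (ball x t) = ENNReal.ofReal (t ^ (n : ℝ)) * volume (ball (0 : E) 1) := by
  haveI := nontrivialE hn
  rw [Measure.addHaar_ball volume x ht, finrank_euclideanSpace_fin, Real.rpow_natCast]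

lemma kernel_ball_bound (hn : 0 < n) (hα0 : 0 < α) (hαn : α < n) (c : E) {s : ℝ} (hs : 0 < s) :
    ∫⁻ x in ball c s, ENNReal.ofReal (‖x - c‖ ^ (α - (n : ℝ))) ≤
      (volume (ball (0 : E) 1) * ENNReal.ofReal ((2 : ℝ) ^ (n : ℝ)) *
        (1 - ENNReal.ofReal ((2 : ℝ) ^ (-α)))⁻¹) * ENNReal.ofReal (s ^ α) := by
  classical
  haveI := nontrivialE hn
  set v := volume (ball (0 : E) 1) with hv
  set q : ENNReal := ENNReal.ofReal ((2 : ℝ) ^ (-α)) with hqdef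
  have h2 : (0 : ℝ) < 2 := two_pos
  set rad : ℕ → ℝ := fun k => s * (2 : ℝ) ^ (-(k : ℝ)) with hrad
  have hradpos : ∀ k, 0 < rad k := fun k => mul_pos hs (Real.rpow_pos_of_pos h2 _)
  set A : ℕ → Set E := fun k => ball c (rad k) \ ball c (rad (k + 1)) with hA
  have hcover : ball c s ⊆ {c} ∪ ⋃ k, A k := by
    intro x hx
    rcases eq_or_ne x c with h | h
    · exact Or.inl (by simp [h])
    right
    have hd0 : 0 < dist x c := dist_pos.2 h
    have hds : dist x c < s := mem_ball.1 hx
    have h2k : ∀ k : ℕ, (2 : ℝ) ^ (-(k : ℝ)) = ((2 : ℝ) ^ k)⁻¹ := fun k => by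
      rw [Real.rpow_neg h2.le, Real.rpow_natCast]
    have hPex : ∃ k, rad (k + 1) ≤ dist x c := by
      obtain ⟨k, hk⟩ := pow_unbounded_of_one_lt (s / dist x c) (one_lt_two (α := ℝ))
      refine ⟨k, ?_⟩
      have hk2 : s / dist x c < 2 ^ (k + 1) :=
        hk.trans_le (pow_le_pow_right₀ one_le_two (Nat.le_succ k))
      rw [hrad]
      simp only [h2k]
      push_cast
      rw [div_lt_iff₀ hd0] at hk2
      rw [mul_inv_le_iff₀ (by positivity)]
      linarith [hk2]
    let k0 := Nat.find hPex
    have hk0 : rad (k0 + 1) ≤ dist x c := Nat.find_spec hPex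
    have hlt : dist x c < rad k0 := by
      rcases Nat.eq_zero_or_pos k0 with h0 | h0
      · have : rad 0 = s := by simp [hrad]
        rw [h0, this]; exact hds
      · obtain ⟨m, hm⟩ := Nat.exists_eq_add_of_lt h0
        have hmin := Nat.find_min hPex (show m < k0 by omega)
        push_neg at hmin
        have : k0 = m + 1 := by omega
        rw [this]; exact hmin
    exact Set.mem_iUnion.2 ⟨k0, mem_ball.2 hlt, fun hmem => absurd (mem_ball.1 hmem) (not_lt.2 hk0)⟩
  have hAk : ∀ k, ∫⁻ x in A k, ENNReal.ofReal (‖x - c‖ ^ (α - (n : ℝ))) ≤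
      ENNReal.ofReal (rad (k + 1) ^ (α - (n : ℝ))) * (ENNReal.ofReal (rad k ^ (n : ℝ)) * v) := by
    intro k
    have hb : ∫⁻ x in A k, ENNReal.ofReal (‖x - c‖ ^ (α - (n : ℝ))) ≤
        ∫⁻ _ in A k, ENNReal.ofReal (rad (k + 1) ^ (α - (n : ℝ))) := by
      refine setLIntegral_mono measurable_const (fun x hx => ?_)
      have hx1 : rad (k + 1) ≤ ‖x - c‖ := by
        have := hx.2
        rw [mem_ball, not_lt] at this
        rwa [← dist_eq_norm]
      exact ENNReal.ofReal_le_ofReal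
        (Real.rpow_le_rpow_of_nonpos (hradpos (k + 1)) hx1 (by push_cast; linarith))
    rw [setLIntegral_const] at hb
    refine hb.trans ?_
    refine mul_le_mul_right ?_ _
    calc volume (A k) ≤ volume (ball c (rad k)) := measure_mono Set.diff_subset
      _ = ENNReal.ofReal (rad k ^ (n : ℝ)) * v := vol_ball hn c (hradpos k).le
  have hreal : ∀ k : ℕ, rad (k + 1) ^ (α - (n : ℝ)) * rad k ^ (n : ℝ) =
      s ^ α * ((2 : ℝ) ^ (n : ℝ) * ((2 : ℝ) ^ (-α)) ^ (k + 1)) := by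
    intro k
    have hs' := hs.le
    have h2' := h2.le
    rw [hrad]
    simp only []
    push_cast
    rw [Real.mul_rpow hs' (Real.rpow_nonneg h2' _), Real.mul_rpow hs' (Real.rpow_nonneg h2' _),
      ← Real.rpow_natCast ((2 : ℝ) ^ (-α)) (k + 1), ← Real.rpow_mul h2',
      ← Real.rpow_mul h2', ← Real.rpow_mul h2',
      mul_mul_mul_comm, ← Real.rpow_add hs, ← Real.rpow_add h2, ← Real.rpow_add h2]
    push_cast
    rw [show α - (n : ℝ) + (n : ℝ) = α by ring,
      show -((k : ℝ) + 1) * (α - (n : ℝ)) + -(k : ℝ) * (n : ℝ) = (n : ℝ) + -α * ((k : ℝ) + 1) by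
        ring]
  have hq1 : q ≤ 1 := by
    rw [hqdef, ← ENNReal.ofReal_one]
    exact ENNReal.ofReal_le_ofReal
      (le_of_lt (Real.rpow_lt_one_of_one_lt_of_neg one_lt_two (by linarith)))
  calc ∫⁻ x in ball c s, ENNReal.ofReal (‖x - c‖ ^ (α - (n : ℝ)))
      ≤ ∫⁻ x in {c} ∪ ⋃ k, A k, ENNReal.ofReal (‖x - c‖ ^ (α - (n : ℝ))) :=
        lintegral_mono_set hcover
    _ ≤ (∫⁻ x in ({c} : Set E), ENNReal.ofReal (‖x - c‖ ^ (α - (n : ℝ)))) +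
        ∫⁻ x in ⋃ k, A k, ENNReal.ofReal (‖x - c‖ ^ (α - (n : ℝ))) := lintegral_union_le _ _ _
    _ = ∫⁻ x in ⋃ k, A k, ENNReal.ofReal (‖x - c‖ ^ (α - (n : ℝ))) := by
        rw [setLIntegral_measure_zero _ _ (measure_singleton c), zero_add]
    _ ≤ ∑' k, ∫⁻ x in A k, ENNReal.ofReal (‖x - c‖ ^ (α - (n : ℝ))) := lintegral_iUnion_le _ _
    _ ≤ ∑' k, ENNReal.ofReal (rad (k + 1) ^ (α - (n : ℝ))) * (ENNReal.ofReal (rad k ^ (n : ℝ)) * v)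
        := ENNReal.tsum_le_tsum hAk
    _ = ∑' k : ℕ, (ENNReal.ofReal (s ^ α) * ENNReal.ofReal ((2 : ℝ) ^ (n : ℝ)) * v) * q ^ (k + 1)
        := by
        congr 1
        funext k
        rw [← mul_assoc, ← ENNReal.ofReal_mul (Real.rpow_nonneg (hradpos (k + 1)).le _), hreal k,
          ENNReal.ofReal_mul (Real.rpow_nonneg hs.le _),
          ENNReal.ofReal_mul (Real.rpow_nonneg h2.le _),
          ENNReal.ofReal_pow (Real.rpow_nonneg h2.le _)]
        ring
    _ ≤ ∑' k : ℕ, (ENNReal.ofReal (s ^ α) * ENNReal.ofReal ((2 : ℝ) ^ (n : ℝ)) * v) * q ^ k := by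
        refine ENNReal.tsum_le_tsum (fun k => mul_le_mul_right ?_ _)
        rw [pow_succ]
        exact mul_le_of_le_one_right' hq1
    _ = (ENNReal.ofReal (s ^ α) * ENNReal.ofReal ((2 : ℝ) ^ (n : ℝ)) * v) * (1 - q)⁻¹ := by
        rw [ENNReal.tsum_mul_left, ENNReal.tsum_geometric]
    _ = (v * ENNReal.ofReal ((2 : ℝ) ^ (n : ℝ)) * (1 - q)⁻¹) * ENNReal.ofReal (s ^ α) := by ring

lemma ball_ae_closedBall (hn : 0 < n) (y : E) (ρ : ℝ) :
    (closedBall y ρ : Set E) =ᵐ[volume] (ball y ρ : Set E) := by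
  haveI := nontrivialE hn
  rw [Filter.eventuallyEq_set]
  have h : volume (closedBall y ρ \ ball y ρ) = 0 := by
    rw [closedBall_diff_ball]
    exact Measure.addHaar_sphere volume y ρ
  filter_upwards [measure_eq_zero_iff_ae_notMem.1 h] with x hx
  simp only [Set.mem_diff, not_and, not_not] at hx
  exact ⟨hx, fun h' => ball_subset_closedBall h'⟩

lemma ae_ofReal_le_maximal (hn : 0 < n) (f : E → ℝ) (hf0 : ∀ x, 0 ≤ f x)
    (hfl : LocallyIntegrable f volume) :
    ∀ᵐ y : E ∂volume, ENNReal.ofReal (f y) ≤ maximal n (fun z => ENNReal.ofReal (f z)) y := by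
  haveI := nontrivialE hn
  filter_upwards [(Besicovitch.vitaliFamily (volume : Measure E)).ae_tendsto_average hfl]
    with y hy
  have h1 : Tendsto (fun ρ : ℝ => ⨍ z in closedBall y ρ, f z) (nhdsWithin 0 (Set.Ioi 0))
      (nhds (f y)) := hy.comp (Besicovitch.tendsto_filterAt _ _)
  have h2 : Tendsto (fun ρ : ℝ => ENNReal.ofReal (⨍ z in closedBall y ρ, f z))
      (nhdsWithin 0 (Set.Ioi 0)) (nhds (ENNReal.ofReal (f y))) :=
    (ENNReal.continuous_ofReal.tendsto _).comp h1
  refine le_of_tendsto h2 ?_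
  filter_upwards [self_mem_nhdsWithin] with ρ hρ
  replace hρ : (0 : ℝ) < ρ := hρ
  have hvpos : 0 < volume (ball y ρ) := measure_ball_pos volume y hρ
  have hvtop : volume (ball y ρ) < ⊤ := measure_ball_lt_top
  have hint : IntegrableOn f (closedBall y ρ) volume :=
    hfl.integrableOn_isCompact (isCompact_closedBall y ρ)
  have haeq := ball_ae_closedBall hn y ρ
  have hmeas_eq : volume (closedBall y ρ) = volume (ball y ρ) := measure_congr haeq
  have hofReal : ENNReal.ofReal (⨍ z in closedBall y ρ, f z) =
      (volume (ball y ρ))⁻¹ * ∫⁻ z in ball y ρ, ENNReal.ofReal (f z) := by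
    rw [setAverage_eq, smul_eq_mul,
      ENNReal.ofReal_mul (by positivity),
      ofReal_integral_eq_lintegral_ofReal hint (Filter.Eventually.of_forall fun z => hf0 z),
      measureReal_def, hmeas_eq, ENNReal.ofReal_inv_of_pos (ENNReal.toReal_pos hvpos.ne' hvtop.ne),
      ENNReal.ofReal_toReal hvtop.ne]
    congr 1
    exact setLIntegral_congr haeq
  rw [hofReal]
  exact le_iSup₂ (f := fun (r : ℝ) (_ : 0 < r) =>
    (volume (ball y r))⁻¹ * ∫⁻ z in ball y r, ENNReal.ofReal (f z)) ρ hρ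

end Aux

/-- Oscillation bound via the maximal function of a Riesz potential: for every
nonnegative `f ∈ L¹_loc`, every center `x₀` and radius `r > 0`,
`⨍_{B_r(x₀)} |I_α f - ⨍_{B_r(x₀)} I_α f| ≤ 2 M(I_α f)(x₀) ≤ C I_α(M f)(x₀)`
(absolute differences in `[0,∞]` are expressed via truncated subtraction). -/
theorem stmt13 (n : ℕ) (hn : 0 < n) (α : ℝ) (hα0 : 0 < α) (hαn : α < n) :
    ∃ C : ℝ, 0 < C ∧ ∀ f : EuclideanSpace ℝ (Fin n) → ℝ, Measurable f → (∀ x, 0 ≤ f x) →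
      LocallyIntegrable f volume →
      ∀ (x₀ : EuclideanSpace ℝ (Fin n)) (r : ℝ), 0 < r →
        ∀ g A, g = rieszPot n α (fun y => ENNReal.ofReal (f y)) →
          A = (volume (ball x₀ r))⁻¹ * ∫⁻ y in ball x₀ r, g y →
          (volume (ball x₀ r))⁻¹ * (∫⁻ y in ball x₀ r, ((g y - A) ⊔ (A - g y))) ≤
              2 * maximal n g x₀ ∧
            2 * maximal n g x₀ ≤
              ENNReal.ofReal C *
                rieszPot n α (maximal n (fun z => ENNReal.ofReal (f z))) x₀ := by
  haveI := nontrivialE hn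
  set v := volume (ball (0 : EuclideanSpace ℝ (Fin n)) 1) with hv
  have hvpos : 0 < v := measure_ball_pos volume _ one_pos
  have hvtop : v < ⊤ := measure_ball_lt_top
  set q : ENNReal := ENNReal.ofReal ((2 : ℝ) ^ (-α)) with hqdef
  set Dk : ENNReal := v * ENNReal.ofReal ((2 : ℝ) ^ (n : ℝ)) * (1 - q)⁻¹ with hDk
  have hq1 : q < 1 := by
    rw [hqdef, ← ENNReal.ofReal_one]
    exact (ENNReal.ofReal_lt_ofReal_iff one_pos).2
      (Real.rpow_lt_one_of_one_lt_of_neg one_lt_two (by linarith))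
  have hDktop : Dk ≠ ⊤ := by
    refine ENNReal.mul_ne_top (ENNReal.mul_ne_top hvtop.ne ENNReal.ofReal_ne_top) ?_
    exact ENNReal.inv_ne_top.2 (tsub_pos_of_lt hq1).ne'
  set c0 : ℝ := (3 : ℝ) ^ α * (2 : ℝ) ^ (-α) * (4 : ℝ) ^ (n : ℝ) with hc0
  set c2 : ENNReal := ENNReal.ofReal ((2 : ℝ) ^ ((n : ℝ) - α)) with hc2
  set D' : ENNReal := ENNReal.ofReal c0 * v⁻¹ * Dk + c2 with hD'
  have hD'top : D' ≠ ⊤ := by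
    refine ENNReal.add_ne_top.2 ⟨?_, ENNReal.ofReal_ne_top⟩
    exact ENNReal.mul_ne_top
      (ENNReal.mul_ne_top ENNReal.ofReal_ne_top (ENNReal.inv_ne_top.2 hvpos.ne')) hDktop
  refine ⟨(2 * D').toReal + 1, by positivity, ?_⟩
  intro f hfm hf0 hfl x₀ r hr g A hg hA
  set F : EuclideanSpace ℝ (Fin n) → ENNReal := fun y => ENNReal.ofReal (f y) with hF
  have hFm : Measurable F := hfm.ennreal_ofReal
  set Mf := maximal n F with hMf
  set I := rieszPot n α Mf x₀ with hI
  set k : EuclideanSpace ℝ (Fin n) → EuclideanSpace ℝ (Fin n) → ENNReal :=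
    fun x y => ENNReal.ofReal (‖x - y‖ ^ (α - (n : ℝ))) with hk
  have hkm : Measurable (fun p : EuclideanSpace ℝ (Fin n) × EuclideanSpace ℝ (Fin n) => k p.1 p.2) :=
    ((measurable_fst.sub measurable_snd).norm.pow_const _).ennreal_ofReal
  have hkm1 : ∀ x, Measurable (k x) := fun x =>
    ((measurable_const.sub measurable_id).norm.pow_const _).ennreal_ofReal
  -- Main estimate: for every s > 0, average of g over ball x₀ s is ≤ D' * I
  have key : ∀ s : ℝ, 0 < s →
      (volume (ball x₀ s))⁻¹ * ∫⁻ x in ball x₀ s, g x ≤ D' * I := by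
    intro s hs
    set B := ball x₀ s with hB
    set B2 := ball x₀ (2 * s) with hB2
    have hs2 : (0 : ℝ) < 2 * s := by linarith
    have hvB : volume B = ENNReal.ofReal (s ^ (n : ℝ)) * v := vol_ball hn x₀ hs.le
    have hvBpos : 0 < volume B := measure_ball_pos volume x₀ hs
    have hvBtop : volume B < ⊤ := measure_ball_lt_top
    have hvB2pos : 0 < volume B2 := measure_ball_pos volume x₀ hs2
    have hvB2top : volume B2 < ⊤ := measure_ball_lt_top
    set X := ∫⁻ y in B2, F y with hX
    -- Tonelli
    have hswap : ∫⁻ x in B, g x = ∫⁻ y, (∫⁻ x in B, k x y) * F y := by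
      rw [hg]
      simp only [rieszPot]
      rw [lintegral_lintegral_swap]
      · congr 1
        funext y
        exact lintegral_mul_const' (F y) _ ENNReal.ofReal_ne_top
      · exact (hkm.mul (hFm.comp measurable_snd)).aemeasurable
    -- near part
    have hnear : ∫⁻ y in B2, (∫⁻ x in B, k x y) * F y ≤
        (Dk * ENNReal.ofReal ((3 * s) ^ α)) * X := by
      have hb : ∀ y ∈ B2, (∫⁻ x in B, k x y) ≤ Dk * ENNReal.ofReal ((3 * s) ^ α) := by
        intro y hy
        have hsub : B ⊆ ball y (3 * s) := by
          intro x hx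
          rw [mem_ball] at hx hy ⊢
          have := dist_triangle x x₀ y
          rw [dist_comm x₀ y] at this
          calc dist x y ≤ dist x x₀ + dist y x₀ := this
            _ < s + 2 * s := by exact add_lt_add hx hy
            _ = 3 * s := by ring
        calc (∫⁻ x in B, k x y) ≤ ∫⁻ x in ball y (3 * s), k x y := lintegral_mono_set hsub
          _ ≤ Dk * ENNReal.ofReal ((3 * s) ^ α) :=
            kernel_ball_bound hn hα0 hαn y (by positivity)
      calc ∫⁻ y in B2, (∫⁻ x in B, k x y) * F y
          ≤ ∫⁻ y in B2, (Dk * ENNReal.ofReal ((3 * s) ^ α)) * F y :=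
            setLIntegral_mono (measurable_const.mul hFm)
              (fun y hy => mul_le_mul_left (hb y hy) _)
        _ = (Dk * ENNReal.ofReal ((3 * s) ^ α)) * X :=
            lintegral_const_mul' _ _ (ENNReal.mul_ne_top hDktop ENNReal.ofReal_ne_top)
    -- far part
    have hae := ae_ofReal_le_maximal hn f hf0 hfl
    have hfar : ∫⁻ y in B2ᶜ, (∫⁻ x in B, k x y) * F y ≤ (volume B * c2) * I := by
      have hb : ∀ y ∈ B2ᶜ, (∫⁻ x in B, k x y) ≤ volume B * (c2 * k x₀ y) := by
        intro y hy
        have hyfar : 2 * s ≤ dist x₀ y := by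
          rw [Set.mem_compl_iff, mem_ball, not_lt, dist_comm] at hy
          exact hy
        have hdpos : 0 < dist x₀ y := lt_of_lt_of_le hs2 hyfar
        have hpt : ∀ x ∈ B, k x y ≤ ENNReal.ofReal ((2 : ℝ) ^ ((n : ℝ) - α) *
            ‖x₀ - y‖ ^ (α - (n : ℝ))) := by
          intro x hx
          rw [mem_ball] at hx
          have hxy : dist x₀ y / 2 ≤ dist x y := by
            have := dist_triangle x₀ x y
            have hxx : dist x₀ x < s := by rwa [dist_comm]
            linarith
          have h1 : ‖x - y‖ ^ (α - (n : ℝ)) ≤ (dist x₀ y / 2) ^ (α - (n : ℝ)) := by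
            rw [← dist_eq_norm]
            exact Real.rpow_le_rpow_of_nonpos (by positivity) hxy (by push_cast; linarith)
          have h2 : (dist x₀ y / 2) ^ (α - (n : ℝ)) =
              (2 : ℝ) ^ ((n : ℝ) - α) * ‖x₀ - y‖ ^ (α - (n : ℝ)) := by
            rw [← dist_eq_norm, div_eq_mul_inv, Real.mul_rpow dist_nonneg (by positivity),
              ← Real.rpow_neg_one (2 : ℝ), ← Real.rpow_mul (by norm_num : (0:ℝ) ≤ 2),
              show (-1 : ℝ) * (α - (n : ℝ)) = (n : ℝ) - α by ring, mul_comm]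
          exact ENNReal.ofReal_le_ofReal (h1.trans_eq h2)
        calc (∫⁻ x in B, k x y)
            ≤ ∫⁻ _ in B, ENNReal.ofReal ((2 : ℝ) ^ ((n : ℝ) - α) * ‖x₀ - y‖ ^ (α - (n : ℝ))) :=
              setLIntegral_mono measurable_const hpt
          _ = ENNReal.ofReal ((2 : ℝ) ^ ((n : ℝ) - α) * ‖x₀ - y‖ ^ (α - (n : ℝ))) * volume B :=
              setLIntegral_const _ _
          _ = volume B * (c2 * k x₀ y) := by
              rw [ENNReal.ofReal_mul (by positivity), hc2, hk]
              ring
      calc ∫⁻ y in B2ᶜ, (∫⁻ x in B, k x y) * F y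
          ≤ ∫⁻ y in B2ᶜ, (volume B * c2) * (k x₀ y * F y) := by
            refine setLIntegral_mono ((measurable_const.mul ((hkm1 x₀).mul hFm))) ?_
            intro y hy
            calc (∫⁻ x in B, k x y) * F y ≤ (volume B * (c2 * k x₀ y)) * F y :=
                mul_le_mul_left (hb y hy) _
              _ = (volume B * c2) * (k x₀ y * F y) := by ring
        _ ≤ ∫⁻ y, (volume B * c2) * (k x₀ y * F y) := setLIntegral_le_lintegral _ _
        _ = (volume B * c2) * ∫⁻ y, k x₀ y * F y :=
            lintegral_const_mul' _ _ (ENNReal.mul_ne_top hvBtop.ne ENNReal.ofReal_ne_top)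
        _ ≤ (volume B * c2) * I := by
            refine mul_le_mul_right (lintegral_mono_ae ?_) _
            filter_upwards [hae] with y hy
            exact mul_le_mul_right hy _
    -- lower bound on I
    have hIlow : ENNReal.ofReal ((2 * s) ^ α * (((4 * s) : ℝ) ^ (n : ℝ))⁻¹) * X ≤ I := by
      have hMfb : ∀ y ∈ B2, (ENNReal.ofReal ((4 * s) ^ (n : ℝ)) * v)⁻¹ * X ≤ Mf y := by
        intro y hy
        have hsub : B2 ⊆ ball y (4 * s) := by
          intro z hz
          rw [mem_ball] at hz hy ⊢
          have := dist_triangle z x₀ y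
          rw [dist_comm x₀ y] at this
          calc dist z y ≤ dist z x₀ + dist y x₀ := this
            _ < 2 * s + 2 * s := add_lt_add hz hy
            _ ≤ 4 * s := by linarith
        have hle : (volume (ball y (4 * s)))⁻¹ * ∫⁻ z in ball y (4 * s), F z ≤ Mf y := by
          rw [hMf, maximal]
          exact le_iSup₂ (f := fun (t : ℝ) (_ : 0 < t) =>
            (volume (ball y t))⁻¹ * ∫⁻ z in ball y t, F z) (4 * s) (by positivity)
        refine le_trans ?_ hle
        rw [vol_ball hn y (by positivity : (0:ℝ) ≤ 4 * s)]
        exact mul_le_mul_right (lintegral_mono_set hsub) _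
      have hkb : ∀ y, y ∈ B2 → y ≠ x₀ → ENNReal.ofReal ((2 * s) ^ (α - (n : ℝ))) ≤ k x₀ y := by
        intro y hy hne
        rw [mem_ball] at hy
        have hpos : 0 < ‖x₀ - y‖ := by
          rw [norm_sub_pos_iff]
          exact fun h => hne (h.symm)
        have hlt : ‖x₀ - y‖ ≤ 2 * s := by
          rw [← dist_eq_norm, dist_comm]
          exact hy.le
        exact ENNReal.ofReal_le_ofReal
          (Real.rpow_le_rpow_of_nonpos hpos hlt (by push_cast; linarith))
      have hne : ∀ᵐ y : EuclideanSpace ℝ (Fin n) ∂volume, y ≠ x₀ := by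
        rw [ae_iff]
        simpa using measure_singleton x₀
      have hae2 : ∀ᵐ y ∂(volume.restrict B2),
          ENNReal.ofReal ((2 * s) ^ (α - (n : ℝ))) *
            ((ENNReal.ofReal ((4 * s) ^ (n : ℝ)) * v)⁻¹ * X) ≤ k x₀ y * Mf y := by
        filter_upwards [ae_restrict_mem measurableSet_ball, ae_restrict_of_ae hne] with y h1 h2
        exact mul_le_mul' (hkb y h1 h2) (hMfb y h1)
      have hconst : ENNReal.ofReal ((2 * s) ^ α * (((4 * s) : ℝ) ^ (n : ℝ))⁻¹) * X =
          (ENNReal.ofReal ((2 * s) ^ (α - (n : ℝ))) *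
            ((ENNReal.ofReal ((4 * s) ^ (n : ℝ)) * v)⁻¹ * X)) * volume B2 := by
        rw [vol_ball hn x₀ hs2.le,
          ENNReal.mul_inv (Or.inl (ENNReal.ofReal_pos.2 (by positivity)).ne')
            (Or.inl ENNReal.ofReal_ne_top)]
        have hcancel : v⁻¹ * v = 1 := ENNReal.inv_mul_cancel hvpos.ne' hvtop.ne
        calc ENNReal.ofReal ((2 * s) ^ α * (((4 * s) : ℝ) ^ (n : ℝ))⁻¹) * X
            = (ENNReal.ofReal ((2 * s) ^ (α - (n : ℝ))) *
                (ENNReal.ofReal ((4 * s) ^ (n : ℝ)))⁻¹ *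
                ENNReal.ofReal ((2 * s) ^ (n : ℝ)) * X) * 1 := by
              rw [mul_one]
              congr 1
              rw [← ENNReal.ofReal_inv_of_pos (by positivity),
                ← ENNReal.ofReal_mul (by positivity), ← ENNReal.ofReal_mul (by positivity)]
              congr 1
              rw [mul_right_comm, ← Real.rpow_add (by positivity : (0:ℝ) < 2 * s)]
              rw [show α - (n : ℝ) + (n : ℝ) = α by ring]
          _ = (ENNReal.ofReal ((2 * s) ^ (α - (n : ℝ))) *
                ((ENNReal.ofReal ((4 * s) ^ (n : ℝ)))⁻¹ * v⁻¹ * X)) *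
                (ENNReal.ofReal ((2 * s) ^ (n : ℝ)) * v) := by
              rw [← hcancel]; ring
      calc ENNReal.ofReal ((2 * s) ^ α * (((4 * s) : ℝ) ^ (n : ℝ))⁻¹) * X
          = (ENNReal.ofReal ((2 * s) ^ (α - (n : ℝ))) *
              ((ENNReal.ofReal ((4 * s) ^ (n : ℝ)) * v)⁻¹ * X)) * volume B2 := hconst
        _ = ∫⁻ _ in B2, ENNReal.ofReal ((2 * s) ^ (α - (n : ℝ))) *
              ((ENNReal.ofReal ((4 * s) ^ (n : ℝ)) * v)⁻¹ * X) := (setLIntegral_const _ _).symm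
        _ ≤ ∫⁻ y in B2, k x₀ y * Mf y := lintegral_mono_ae hae2
        _ ≤ ∫⁻ y, k x₀ y * Mf y := setLIntegral_le_lintegral _ _
        _ = I := by rw [hI, rieszPot]
    -- combine
    have hcoef : (ENNReal.ofReal (s ^ (n : ℝ)))⁻¹ * ENNReal.ofReal ((3 * s) ^ α) =
        ENNReal.ofReal c0 * ENNReal.ofReal ((2 * s) ^ α * (((4 * s) : ℝ) ^ (n : ℝ))⁻¹) := by
      rw [← ENNReal.ofReal_inv_of_pos (by positivity), ← ENNReal.ofReal_mul (by positivity),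
        ← ENNReal.ofReal_mul (by positivity)]
      congr 1
      rw [hc0, Real.mul_rpow (by norm_num : (0:ℝ) ≤ 3) hs.le,
        Real.mul_rpow (by norm_num : (0:ℝ) ≤ 2) hs.le,
        Real.mul_rpow (by norm_num : (0:ℝ) ≤ 4) hs.le,
        Real.rpow_neg (by norm_num : (0:ℝ) ≤ 2)]
      have h4 : ((4:ℝ) ^ (n:ℝ)) ≠ 0 := by positivity
      have hsn : (s ^ (n:ℝ)) ≠ 0 := by positivity
      have h2a : ((2:ℝ) ^ α) ≠ 0 := by positivity
      field_simp
    have hnear2 : (volume B)⁻¹ * ((Dk * ENNReal.ofReal ((3 * s) ^ α)) * X) ≤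
        (ENNReal.ofReal c0 * v⁻¹ * Dk) * I := by
      have hBinv : (volume B)⁻¹ = (ENNReal.ofReal (s ^ (n : ℝ)))⁻¹ * v⁻¹ := by
        rw [hvB, ENNReal.mul_inv (Or.inl (ENNReal.ofReal_pos.2 (by positivity)).ne')
          (Or.inl ENNReal.ofReal_ne_top)]
      calc (volume B)⁻¹ * ((Dk * ENNReal.ofReal ((3 * s) ^ α)) * X)
          = ((ENNReal.ofReal (s ^ (n : ℝ)))⁻¹ * ENNReal.ofReal ((3 * s) ^ α)) *
              (v⁻¹ * Dk * X) := by rw [hBinv]; ring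
        _ = (ENNReal.ofReal c0 * v⁻¹ * Dk) *
              (ENNReal.ofReal ((2 * s) ^ α * (((4 * s) : ℝ) ^ (n : ℝ))⁻¹) * X) := by
            rw [hcoef]; ring
        _ ≤ (ENNReal.ofReal c0 * v⁻¹ * Dk) * I := mul_le_mul_right hIlow _
    have hfar2 : (volume B)⁻¹ * ((volume B * c2) * I) ≤ c2 * I := by
      have : (volume B)⁻¹ * ((volume B * c2) * I) = ((volume B)⁻¹ * volume B) * (c2 * I) := by
        ring
      rw [this, ENNReal.inv_mul_cancel hvBpos.ne' hvBtop.ne, one_mul]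
    calc (volume (ball x₀ s))⁻¹ * ∫⁻ x in ball x₀ s, g x
        = (volume B)⁻¹ * ((∫⁻ y in B2, (∫⁻ x in B, k x y) * F y) +
            ∫⁻ y in B2ᶜ, (∫⁻ x in B, k x y) * F y) := by
          rw [hswap, lintegral_add_compl _ (measurableSet_ball : MeasurableSet B2)]
      _ = (volume B)⁻¹ * (∫⁻ y in B2, (∫⁻ x in B, k x y) * F y) +
          (volume B)⁻¹ * (∫⁻ y in B2ᶜ, (∫⁻ x in B, k x y) * F y) := mul_add _ _ _
      _ ≤ (volume B)⁻¹ * ((Dk * ENNReal.ofReal ((3 * s) ^ α)) * X) +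
          (volume B)⁻¹ * ((volume B * c2) * I) :=
          add_le_add (mul_le_mul_right hnear _) (mul_le_mul_right hfar _)
      _ ≤ (ENNReal.ofReal c0 * v⁻¹ * Dk) * I + c2 * I := add_le_add hnear2 hfar2
      _ = D' * I := by rw [hD']; ring
  -- conclude part 2
  have hM2 : maximal n g x₀ ≤ D' * I := by
    rw [maximal]
    exact iSup₂_le (fun s hs => key s hs)
  constructor
  · -- part 1
    set vB := volume (ball x₀ r) with hvB
    have hvBpos : 0 < vB := measure_ball_pos volume x₀ hr
    have hvBtop : vB < ⊤ := measure_ball_lt_top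
    have hAle : A ≤ maximal n g x₀ := by
      rw [hA, maximal]
      exact le_iSup₂ (f := fun (t : ℝ) (_ : 0 < t) =>
        (volume (ball x₀ t))⁻¹ * ∫⁻ y in ball x₀ t, g y) r hr
    calc vB⁻¹ * (∫⁻ y in ball x₀ r, ((g y - A) ⊔ (A - g y)))
        ≤ vB⁻¹ * (∫⁻ y in ball x₀ r, (g y + A)) := by
          refine mul_le_mul_right (lintegral_mono fun y => ?_) _
          exact sup_le (le_add_right tsub_le_self) (le_add_left tsub_le_self)
      _ = vB⁻¹ * ((∫⁻ y in ball x₀ r, g y) + A * vB) := by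
          rw [lintegral_add_right _ measurable_const, setLIntegral_const]
      _ = A + A * (vB⁻¹ * vB) := by
          rw [mul_add, hA, hvB]
          ring
      _ = A + A := by rw [ENNReal.inv_mul_cancel hvBpos.ne' hvBtop.ne, mul_one]
      _ = 2 * A := by ring
      _ ≤ 2 * maximal n g x₀ := mul_le_mul_right hAle _
  · -- part 2
    have h1 : 2 * maximal n g x₀ ≤ (2 * D') * I := by
      calc 2 * maximal n g x₀ ≤ 2 * (D' * I) := mul_le_mul_right hM2 _
        _ = (2 * D') * I := by ring
    refine h1.trans (mul_le_mul_left ?_ _)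
    have h2D : (2 : ENNReal) * D' ≠ ⊤ := ENNReal.mul_ne_top (by norm_num) hD'top
    calc (2 : ENNReal) * D' = ENNReal.ofReal ((2 * D').toReal) := (ENNReal.ofReal_toReal h2D).symm
      _ ≤ ENNReal.ofReal ((2 * D').toReal + 1) := ENNReal.ofReal_le_ofReal (by linarith)
end
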